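/- Let Q ∈ ℚ⟦X⟧ be the formal power series with zero constant coefficient satisfying Q·(1 − Q)³ = X (so 1 − Q has constant coefficient 1 and is invertible), and let z := Q·(1 − 2Q)²·(1 − Q)^{−3} ∈ ℚ⟦X⟧, a series with zero constant coefficient. Then X·z = (Q − 2Q²)². Moreover, if R ∈ ℚ⟦T⟧ is the formal power series with zero constant coefficient satisfying R·(1 − R)² = T, then the substitution of z into R equals Q·(1 − Q)^{−1} in ℚ⟦X⟧. -/

import Mathlib

open PowerSeries

/-- Substitution of the power series `f` (assumed to have zero constant coefficient)
into the power series `g`. -/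
noncomputable def substInto (f g : PowerSeries ℚ) : PowerSeries ℚ :=
  PowerSeries.mk fun n =>
    PowerSeries.coeff n (Polynomial.aeval f (PowerSeries.trunc (n + 1) g))

lemma coeff_pow_eq_zero' {f : PowerSeries ℚ} (hf : constantCoeff f = 0)
    {n k : ℕ} (h : n < k) : coeff n (f ^ k) = 0 := by
  have hd : (X : PowerSeries ℚ) ^ k ∣ f ^ k := pow_dvd_pow_of_dvd (X_dvd_iff.mpr hf) k
  exact (X_pow_dvd_iff.mp hd) n h

lemma coeff_aeval' {f : PowerSeries ℚ} (hf : constantCoeff f = 0) (P : Polynomial ℚ) (n : ℕ) :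
    coeff n (Polynomial.aeval f P) = ∑ k ∈ Finset.range (n + 1), P.coeff k * coeff n (f ^ k) := by
  have hdeg : P.natDegree < max (n + 1) (P.natDegree + 1) :=
    lt_of_lt_of_le (Nat.lt_succ_self _) (le_max_right _ _)
  rw [Polynomial.aeval_eq_sum_range' hdeg f, map_sum]
  rw [show (∑ k ∈ Finset.range (max (n + 1) (P.natDegree + 1)),
      coeff n (P.coeff k • f ^ k)) = ∑ k ∈ Finset.range (max (n + 1) (P.natDegree + 1)),
      P.coeff k * coeff n (f ^ k) from Finset.sum_congr rfl fun k _ => by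
        rw [coeff_smul, smul_eq_mul]]
  refine (Finset.sum_subset (Finset.range_subset_range.mpr (le_max_left _ _)) fun k _ hk => ?_).symm
  rw [coeff_pow_eq_zero' hf (by simpa using hk), mul_zero]

lemma coeff_substInto' {f : PowerSeries ℚ} (hf : constantCoeff f = 0) (g : PowerSeries ℚ) (n : ℕ) :
    coeff n (substInto f g) = ∑ k ∈ Finset.range (n + 1), coeff k g * coeff n (f ^ k) := by
  rw [substInto, coeff_mk, coeff_aeval' hf]
  exact Finset.sum_congr rfl fun k hk => by
    rw [coeff_trunc, if_pos (Finset.mem_range.mp hk)]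

lemma substInto_stable {f : PowerSeries ℚ} (hf : constantCoeff f = 0) (g : PowerSeries ℚ)
    {n m : ℕ} (h : n < m) :
    coeff n (Polynomial.aeval f (trunc m g)) = coeff n (substInto f g) := by
  rw [coeff_substInto' hf, coeff_aeval' hf]
  exact Finset.sum_congr rfl fun k hk => by
    rw [coeff_trunc, if_pos (lt_of_lt_of_le (Finset.mem_range.mp hk) h)]

lemma substInto_one (f : PowerSeries ℚ) : substInto f 1 = 1 := by
  ext n
  rw [substInto, coeff_mk, trunc_one, map_one]

lemma substInto_zero (f : PowerSeries ℚ) : substInto f 0 = 0 := by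
  ext n
  simp [substInto, coeff_mk, map_zero]

lemma substInto_add (f g h : PowerSeries ℚ) :
    substInto f (g + h) = substInto f g + substInto f h := by
  ext n
  rw [substInto, coeff_mk, map_add, map_add, map_add, map_add, substInto, substInto,
    coeff_mk, coeff_mk]

lemma substInto_mul {f : PowerSeries ℚ} (hf : constantCoeff f = 0) (g h : PowerSeries ℚ) :
    substInto f (g * h) = substInto f g * substInto f h := by
  ext n
  rw [coeff_mul]
  have hrhs : ∑ p ∈ Finset.HasAntidiagonal.antidiagonal n, coeff p.1 (substInto f g) * coeff p.2 (substInto f h)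
      = coeff n (Polynomial.aeval f (trunc (n + 1) g) * Polynomial.aeval f (trunc (n + 1) h)) := by
    rw [coeff_mul]
    refine Finset.sum_congr rfl fun p hp => ?_
    have h1 : p.1 < n + 1 := by
      have := Finset.HasAntidiagonal.mem_antidiagonal.mp hp; omega
    have h2 : p.2 < n + 1 := by
      have := Finset.HasAntidiagonal.mem_antidiagonal.mp hp; omega
    rw [substInto_stable hf g h1, substInto_stable hf h h2]
  rw [hrhs, ← map_mul, coeff_substInto' hf, coeff_aeval' hf]
  refine Finset.sum_congr rfl fun k hk => ?_
  congr 1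
  rw [Polynomial.coeff_mul, coeff_mul]
  refine Finset.sum_congr rfl fun p hp => ?_
  have hk' : k < n + 1 := Finset.mem_range.mp hk
  have h1 : p.1 < n + 1 := by have := Finset.HasAntidiagonal.mem_antidiagonal.mp hp; omega
  have h2 : p.2 < n + 1 := by have := Finset.HasAntidiagonal.mem_antidiagonal.mp hp; omega
  rw [coeff_trunc, coeff_trunc, if_pos h1, if_pos h2]

lemma substInto_X {f : PowerSeries ℚ} (hf : constantCoeff f = 0) : substInto f X = f := by
  ext n
  rw [coeff_substInto' hf]
  cases n with
  | zero =>
    simp [Finset.sum_range_one, coeff_zero_eq_constantCoeff, hf]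
  | succ n =>
    rw [Finset.sum_eq_single 1]
    · simp
    · intro b _ hb; simp [coeff_X, hb]
    · intro hmem; exact absurd (Finset.mem_range.mpr (by omega)) hmem

noncomputable def substHom (f : PowerSeries ℚ) (hf : constantCoeff f = 0) :
    PowerSeries ℚ →+* PowerSeries ℚ where
  toFun := substInto f
  map_one' := substInto_one f
  map_mul' := substInto_mul hf
  map_zero' := substInto_zero f
  map_add' := substInto_add f

/-- Let `Q(0) = 0` with `Q·(1−Q)³ = X` and `z := Q·(1−2Q)²·(1−Q)⁻³`. Then
`X·z = (Q − 2Q²)²`; moreover if `R(0) = 0` satisfies `R·(1−R)² = T`, then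
substituting `z` into `R` gives `Q·(1−Q)⁻¹`. -/
theorem subst_simple_triang_to_irreducible_triang
    (Q R : PowerSeries ℚ)
    (hQ0 : constantCoeff Q = 0) (hQ : Q * (1 - Q) ^ 3 = X)
    (hR0 : constantCoeff R = 0) (hR : R * (1 - R) ^ 2 = X) :
    letI z : PowerSeries ℚ := Q * (1 - 2 * Q) ^ 2 * ((1 - Q)⁻¹) ^ 3
    X * z = (Q - 2 * Q ^ 2) ^ 2 ∧ substInto z R = Q * (1 - Q)⁻¹ := by
  show X * (Q * (1 - 2 * Q) ^ 2 * ((1 - Q)⁻¹) ^ 3) = (Q - 2 * Q ^ 2) ^ 2 ∧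
    substInto (Q * (1 - 2 * Q) ^ 2 * ((1 - Q)⁻¹) ^ 3) R = Q * (1 - Q)⁻¹
  have hc : constantCoeff (1 - Q) ≠ 0 := by simp [hQ0]
  have h1 : (1 - Q) * (1 - Q)⁻¹ = 1 := PowerSeries.mul_inv_cancel _ hc
  set z : PowerSeries ℚ := Q * (1 - 2 * Q) ^ 2 * ((1 - Q)⁻¹) ^ 3 with hzdef
  have hz0 : constantCoeff z = 0 := by
    rw [hzdef]; simp [hQ0]
  have part1 : X * z = (Q - 2 * Q ^ 2) ^ 2 := by
    rw [hzdef, ← hQ]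
    linear_combination (Q ^ 2 * (1 - 2 * Q) ^ 2 *
      (((1 - Q) * (1 - Q)⁻¹) ^ 2 + (1 - Q) * (1 - Q)⁻¹ + 1)) * h1
  have hS : (Q * (1 - Q)⁻¹) * (1 - Q * (1 - Q)⁻¹) ^ 2 = z := by
    rw [hzdef]
    linear_combination (-(Q * (1 - Q)⁻¹) *
      (1 - Q * (1 - Q)⁻¹ + (1 - 2 * Q) * (1 - Q)⁻¹)) * h1
  set W : PowerSeries ℚ := substInto z R with hWdef
  have hWeq : W * (1 - W) ^ 2 = z := by
    have h := congrArg (substHom z hz0) hR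
    simpa only [map_mul, map_sub, map_pow, map_one, substHom, RingHom.coe_mk, MonoidHom.coe_mk,
      OneHom.coe_mk, substInto_X hz0, ← hWdef] using h
  have hW0 : constantCoeff W = 0 := by
    rw [← coeff_zero_eq_constantCoeff, hWdef, coeff_substInto' hz0]
    simp [Finset.sum_range_one, coeff_zero_eq_constantCoeff, hR0]
  have hS0 : constantCoeff (Q * (1 - Q)⁻¹) = 0 := by simp [hQ0]
  have key : (W - Q * (1 - Q)⁻¹) *
      (1 - 2 * (W + Q * (1 - Q)⁻¹) + (W ^ 2 + W * (Q * (1 - Q)⁻¹) + (Q * (1 - Q)⁻¹) ^ 2)) = 0 := by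
    linear_combination hWeq - hS
  refine ⟨part1, ?_⟩
  rcases mul_eq_zero.mp key with h | h
  · exact sub_eq_zero.mp h
  · exfalso
    have h0 := congrArg (constantCoeff) h
    simp [hW0, hS0] at h0
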